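/- If the smoothed multitask square-root Lasso estimator B̂ minimizes B ↦ g((Y − XB)/√(nq)) + λ‖B‖_{2,1} where g = ‖·‖_F □ (‖·‖_F²/(2σ_min) + σ_min/2), and the residual Ê = Y − XB̂ satisfies ‖Ê‖_F/√(nq) ≥ σ_min, then first-order optimality implies (1/(nq))‖XᵀÊ‖_{2,∞} ≤ λ·‖Ê‖_F/√(nq); if instead ‖Ê‖_F/√(nq) < σ_min, then (1/(nq))‖XᵀÊ‖_{2,∞} ≤ λσ_min. In both cases (1/(nq))‖XᵀÊ‖_{2,∞} ≤ λ·max(‖Ê‖_F/√(nq), σ_min). -/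

import Mathlib

open scoped BigOperators
open Matrix Classical

/-- Euclidean norm of a row. -/
noncomputable def rowNorm {q : ℕ} (v : Fin q → ℝ) : ℝ := Real.sqrt (∑ j, (v j) ^ 2)

/-- `ℓ_{2,1}` norm: sum of row Euclidean norms. -/
noncomputable def norm21 {p q : ℕ} (B : Matrix (Fin p) (Fin q) ℝ) : ℝ :=
  ∑ j, rowNorm (B j)

/-- `ℓ_{2,∞}` norm: maximum of row Euclidean norms. -/
noncomputable def norm2inf {p q : ℕ} (B : Matrix (Fin p) (Fin q) ℝ) : ℝ :=
  ⨆ j, rowNorm (B j)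

/-- Frobenius norm of a real matrix. -/
noncomputable def frob {n q : ℕ} (Z : Matrix (Fin n) (Fin q) ℝ) : ℝ :=
  Real.sqrt (∑ i, ∑ j, (Z i j) ^ 2)

/-- Smoothed Frobenius norm: infimal convolution of `‖·‖_F` with
`W ↦ ‖W‖_F²/(2σmin) + σmin/2`. -/
noncomputable def smoothedFrob {n q : ℕ} (σmin : ℝ) (Z : Matrix (Fin n) (Fin q) ℝ) : ℝ :=
  sInf {v : ℝ | ∃ W : Matrix (Fin n) (Fin q) ℝ,
    v = frob (Z - W) + ((frob W) ^ 2 / (2 * σmin) + σmin / 2)}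

/- ## Auxiliary material -/

noncomputable def vE {q : ℕ} (v : Fin q → ℝ) : EuclideanSpace ℝ (Fin q) := WithLp.toLp 2 v

lemma rowNorm_eq {q : ℕ} (v : Fin q → ℝ) : rowNorm v = ‖vE v‖ := by
  rw [EuclideanSpace.norm_eq, rowNorm]
  congr 1
  refine Finset.sum_congr rfl fun j _ => ?_
  rw [Real.norm_eq_abs, sq_abs]; rfl

lemma rowNorm_nonneg {q : ℕ} (v : Fin q → ℝ) : 0 ≤ rowNorm v := Real.sqrt_nonneg _

lemma rowNorm_add_smul_le {q : ℕ} (v w : Fin q → ℝ) (t : ℝ) (ht : 0 ≤ t) :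
    rowNorm (fun k => v k + t * w k) ≤ rowNorm v + t * rowNorm w := by
  have h : (fun k => v k + t * w k) = (v + t • w) := by funext k; simp [mul_comm]
  rw [h, rowNorm_eq, rowNorm_eq, rowNorm_eq]
  have h2 : vE (v + t • w) = vE v + t • vE w := by
    simp only [vE, WithLp.toLp_add, WithLp.toLp_smul]
  rw [h2]
  calc ‖vE v + t • vE w‖ ≤ ‖vE v‖ + ‖t • vE w‖ := norm_add_le _ _
  _ = ‖vE v‖ + t * ‖vE w‖ := by rw [norm_smul, Real.norm_eq_abs, abs_of_nonneg ht]

noncomputable def mE {n q : ℕ} (Z : Matrix (Fin n) (Fin q) ℝ) :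
    EuclideanSpace ℝ (Fin n × Fin q) :=
  WithLp.toLp 2 (fun ij : Fin n × Fin q => Z ij.1 ij.2)

lemma mE_sub {n q : ℕ} (Z W : Matrix (Fin n) (Fin q) ℝ) : mE (Z - W) = mE Z - mE W := by
  unfold mE; rw [← WithLp.toLp_sub]; rfl

lemma frob_eq {n q : ℕ} (Z : Matrix (Fin n) (Fin q) ℝ) : frob Z = ‖mE Z‖ := by
  rw [EuclideanSpace.norm_eq, frob]
  congr 1
  rw [Fintype.sum_prod_type]
  simp [mE, Real.norm_eq_abs, sq_abs]

lemma frob_nonneg {n q : ℕ} (Z : Matrix (Fin n) (Fin q) ℝ) : 0 ≤ frob Z := Real.sqrt_nonneg _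

lemma frob_smul {n q : ℕ} (t : ℝ) (Z : Matrix (Fin n) (Fin q) ℝ) :
    frob (t • Z) = |t| * frob Z := by
  rw [frob_eq, frob_eq]
  have h : mE (t • Z) = t • mE Z := by
    unfold mE; rw [← WithLp.toLp_smul]; rfl
  rw [h, norm_smul, Real.norm_eq_abs]

noncomputable def huber (σ r : ℝ) : ℝ := if σ ≤ r then r else r ^ 2 / (2 * σ) + σ / 2

lemma huber_tangent {σ a x : ℝ} (hσ : 0 < σ) :
    huber σ a + (if σ ≤ a then 1 else a / σ) * (x - a) ≤ huber σ x := by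
  unfold huber
  have hσ' := hσ.ne'
  split_ifs with h1 h2 h2
  · linarith
  · have h3 : x ≤ x ^ 2 / (2 * σ) + σ / 2 := by
      rw [← sub_nonneg]
      have : x ^ 2 / (2 * σ) + σ / 2 - x = (x - σ) ^ 2 / (2 * σ) := by field_simp; ring
      rw [this]; positivity
    linarith
  · rw [← sub_nonneg]
    have : x - (a ^ 2 / (2 * σ) + σ / 2 + a / σ * (x - a)) =
        ((σ - a) * (2 * x - σ - a)) / (2 * σ) := by field_simp; ring
    rw [this]
    have : 0 ≤ (σ - a) * (2 * x - σ - a) := by nlinarith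
    positivity
  · rw [← sub_nonneg]
    have : x ^ 2 / (2 * σ) + σ / 2 - (a ^ 2 / (2 * σ) + σ / 2 + a / σ * (x - a)) =
        (x - a) ^ 2 / (2 * σ) := by field_simp; ring
    rw [this]; positivity

lemma frob_triangle_sub {n q : ℕ} (Z W : Matrix (Fin n) (Fin q) ℝ) :
    frob Z - frob W ≤ frob (Z - W) := by
  rw [frob_eq, frob_eq, frob_eq, mE_sub]
  exact norm_sub_norm_le _ _

lemma smoothedFrob_eq {n q : ℕ} {σ : ℝ} (hσ : 0 < σ) (Z : Matrix (Fin n) (Fin q) ℝ) :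
    smoothedFrob σ Z = huber σ (frob Z) := by
  set r := frob Z with hr
  have hr0 : 0 ≤ r := frob_nonneg Z
  apply le_antisymm
  · rcases le_or_gt σ r with h | h
    · have hrpos : 0 < r := lt_of_lt_of_le hσ h
      have hmem : r ∈ {v : ℝ | ∃ W : Matrix (Fin n) (Fin q) ℝ,
          v = frob (Z - W) + ((frob W) ^ 2 / (2 * σ) + σ / 2)} := by
        refine ⟨(σ / r) • Z, ?_⟩
        have h1 : Z - (σ / r) • Z = (1 - σ / r) • Z := by
          rw [sub_smul, one_smul]
        have h2 : frob ((σ / r) • Z) = σ := by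
          rw [frob_smul, abs_of_nonneg (by positivity), ← hr, div_mul_cancel₀ _ hrpos.ne']
        have h3 : frob (Z - (σ / r) • Z) = r - σ := by
          rw [h1, frob_smul, abs_of_nonneg (by rw [sub_nonneg]; exact div_le_one_of_le₀ h hr0),
            ← hr]
          field_simp
        rw [h2, h3]
        field_simp
        ring
      have := csInf_le ?_ hmem
      · rw [huber, if_pos h]; exact this
      · refine ⟨0, fun v hv => ?_⟩
        obtain ⟨W, rfl⟩ := hv
        have := frob_nonneg (Z - W)
        have := frob_nonneg W
        positivity
    · have hmem : r ^ 2 / (2 * σ) + σ / 2 ∈ {v : ℝ | ∃ W : Matrix (Fin n) (Fin q) ℝ,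
          v = frob (Z - W) + ((frob W) ^ 2 / (2 * σ) + σ / 2)} := by
        refine ⟨Z, ?_⟩
        have h1 : frob (Z - Z) = 0 := by
          simp [frob]
        rw [sub_self] at h1 ⊢
        rw [h1, ← hr]; ring
      have := csInf_le ?_ hmem
      · rw [huber, if_neg (not_le.mpr h)]; exact this
      · refine ⟨0, fun v hv => ?_⟩
        obtain ⟨W, rfl⟩ := hv
        have := frob_nonneg (Z - W)
        have := frob_nonneg W
        positivity
  · refine le_csInf ⟨frob (Z - Z) + ((frob Z) ^ 2 / (2 * σ) + σ / 2), Z, rfl⟩ ?_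
    rintro v ⟨W, rfl⟩
    set w := frob W with hw
    have hw0 : 0 ≤ w := frob_nonneg W
    have hd : r - w ≤ frob (Z - W) := frob_triangle_sub Z W
    have hd0 : 0 ≤ frob (Z - W) := frob_nonneg _
    set d := frob (Z - W)
    rw [huber]
    split_ifs with h
    · have key : w ≤ w ^ 2 / (2 * σ) + σ / 2 := by
        rw [← sub_nonneg]
        have : w ^ 2 / (2 * σ) + σ / 2 - w = (w - σ) ^ 2 / (2 * σ) := by field_simp; ring
        rw [this]; positivity
      linarith
    · push_neg at h
      rcases le_or_gt w r with hwr | hwr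
      · have key : r ^ 2 / (2 * σ) ≤ (r - w) + w ^ 2 / (2 * σ) := by
          rw [← sub_nonneg]
          have : (r - w) + w ^ 2 / (2 * σ) - r ^ 2 / (2 * σ) =
              ((r - w) * (2 * σ - r - w)) / (2 * σ) := by field_simp; ring
          rw [this]
          have : 0 ≤ (r - w) * (2 * σ - r - w) := by nlinarith
          positivity
        linarith
      · have : r ^ 2 / (2 * σ) ≤ w ^ 2 / (2 * σ) := by
          gcongr
        linarith


lemma eps_helper {a ε : ℝ} (ha : 0 ≤ a) (hε : 0 < ε) : a * (ε / (a + 1)) ≤ ε := by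
  have h : 0 < a + 1 := by linarith
  rw [mul_div_assoc', div_le_iff₀ h]
  nlinarith

lemma arith_step {A B n1 n2 lam t s : ℝ} (hlam : 0 < lam)
    (hB : A + lam * n1 ≤ B + lam * n2) (h21 : n2 ≤ n1 + t * s) : A ≤ B + lam * (t * s) := by
  nlinarith

lemma huber_smooth {σ a x : ℝ} (hσ : 0 < σ) (ha : 0 ≤ a) (hx : 0 ≤ x) :
    huber σ x ≤ huber σ a + (if σ ≤ a then 1 else a / σ) * (x - a) + (x - a) ^ 2 / (2 * σ) := by
  unfold huber
  have hσ' := hσ.ne'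
  split_ifs with h1 h2 h2
  · have := div_nonneg (sq_nonneg (x - a)) (by linarith : (0:ℝ) ≤ 2 * σ)
    linarith
  · rw [← sub_nonneg]
    have hkey : a ^ 2 / (2 * σ) + σ / 2 + a / σ * (x - a) + (x - a) ^ 2 / (2 * σ) - x =
        (x - σ) ^ 2 / (2 * σ) := by field_simp; ring
    rw [hkey]; positivity
  · rw [← sub_nonneg]
    have hkey : a + 1 * (x - a) + (x - a) ^ 2 / (2 * σ) - (x ^ 2 / (2 * σ) + σ / 2) =
        ((x - a) ^ 2 - (x - σ) ^ 2) / (2 * σ) := by field_simp; ring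
    rw [hkey]
    apply div_nonneg _ (by linarith)
    nlinarith
  · have hkey : a ^ 2 / (2 * σ) + σ / 2 + a / σ * (x - a) + (x - a) ^ 2 / (2 * σ) =
        x ^ 2 / (2 * σ) + σ / 2 := by field_simp; ring
    rw [hkey]

lemma slope_bound {σ lam c r s M k F t : ℝ} (hσ : 0 < σ) (hc : 0 < c) (hr : 0 < r)
    (hk : 0 < k) (hF0 : 0 ≤ F) (ht : 0 < t) (ht1 : t ≤ 1) (hM0 : 0 ≤ M)
    (hF2 : F ^ 2 = r ^ 2 - 2 * t * s ^ 2 + t ^ 2 * M)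
    (h3 : k * (c * r - c * F) ≤ c ^ 2 * (F - r) ^ 2 / (2 * σ) + lam * (t * s)) :
    2 * (k * c) * s ^ 2 ≤ 2 * lam * s * r +
      (k * c * M + c ^ 2 * (2 * s ^ 2 + M) ^ 2 / (σ * r)) * t := by
  have hq1 : (F - r) ^ 2 * r ^ 2 ≤ (F ^ 2 - r ^ 2) ^ 2 := by
    have h2F : (0:ℝ) ≤ F ^ 2 + 2 * F * r := by
      have := mul_nonneg (mul_nonneg (by norm_num : (0:ℝ) ≤ 2) hF0) hr.le
      nlinarith [sq_nonneg F]
    nlinarith [mul_nonneg (sq_nonneg (F - r)) h2F]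
  have hq2 : (F ^ 2 - r ^ 2) ^ 2 = t ^ 2 * (2 * s ^ 2 - t * M) ^ 2 := by rw [hF2]; ring
  have hq3 : (2 * s ^ 2 - t * M) ^ 2 ≤ (2 * s ^ 2 + M) ^ 2 := by
    have hf1 : (0:ℝ) ≤ 4 * s ^ 2 + M - t * M := by nlinarith [sq_nonneg s]
    have hf2 : (0:ℝ) ≤ M + t * M := by nlinarith
    nlinarith [mul_nonneg hf1 hf2]
  have hq4 : (F - r) ^ 2 * r ^ 2 ≤ t ^ 2 * (2 * s ^ 2 + M) ^ 2 := by
    have := mul_le_mul_of_nonneg_left hq3 (sq_nonneg t)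
    linarith only [hq1, hq2.le, hq2.ge, this]
  have he2 : t * (2 * s ^ 2 - t * M) ≤ (r - F) * (2 * r) := by
    nlinarith [sq_nonneg (F - r)]
  have h3' : k * c * (r - F) * (2 * σ) ≤ c ^ 2 * (F - r) ^ 2 + 2 * σ * lam * (t * s) := by
    have hd : c ^ 2 * (F - r) ^ 2 / (2 * σ) * (2 * σ) = c ^ 2 * (F - r) ^ 2 := by
      field_simp
    have hm := mul_le_mul_of_nonneg_right h3 (by linarith : (0:ℝ) ≤ 2 * σ)
    linarith only [hm, hd.le, hd.ge]
  -- multiply h3' by r², bound both sides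
  have keyt : σ * k * c * r * (t * (2 * s ^ 2 - t * M)) ≤
      c ^ 2 * t ^ 2 * (2 * s ^ 2 + M) ^ 2 + 2 * σ * lam * t * s * r ^ 2 := by
    have hm1 := mul_le_mul_of_nonneg_right h3' (by positivity : (0:ℝ) ≤ r ^ 2)
    have hm2 := mul_le_mul_of_nonneg_left he2
      (by positivity : (0:ℝ) ≤ σ * k * c * r)
    have hq4c := mul_le_mul_of_nonneg_left hq4 (sq_nonneg c)
    linarith only [hm1, hm2, hq4c]
  have key : σ * k * c * r * (2 * s ^ 2 - t * M) ≤
      c ^ 2 * t * (2 * s ^ 2 + M) ^ 2 + 2 * σ * lam * s * r ^ 2 := by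
    have hh : (σ * k * c * r * (2 * s ^ 2 - t * M)) * t ≤
        (c ^ 2 * t * (2 * s ^ 2 + M) ^ 2 + 2 * σ * lam * s * r ^ 2) * t := by
      linarith only [keyt]
    exact le_of_mul_le_mul_right hh ht
  -- conclude by dividing by σ * r
  have hσr : 0 < σ * r := mul_pos hσ hr
  have expand : (2 * lam * s * r +
      (k * c * M + c ^ 2 * (2 * s ^ 2 + M) ^ 2 / (σ * r)) * t - 2 * (k * c) * s ^ 2) * (σ * r)
      = c ^ 2 * t * (2 * s ^ 2 + M) ^ 2 + 2 * σ * lam * s * r ^ 2 + σ * r * (k * c * M) * t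
        - σ * k * c * r * (2 * s ^ 2) := by
    field_simp
    ring
  have h0 : (0:ℝ) * (σ * r) ≤ (2 * lam * s * r +
      (k * c * M + c ^ 2 * (2 * s ^ 2 + M) ^ 2 / (σ * r)) * t - 2 * (k * c) * s ^ 2) * (σ * r) := by
    rw [expand, zero_mul]
    linarith only [key]
  have := le_of_mul_le_mul_right h0 hσr
  linarith

/-- First-order optimality bounds for the smoothed multitask square-root Lasso. -/
theorem smoothed_sqrt_lasso_optimality {n p q : ℕ} (hn : 0 < n) (hq : 0 < q)
    (σmin : ℝ) (hσ : 0 < σmin) (lam : ℝ) (hlam : 0 < lam)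
    (X : Matrix (Fin n) (Fin p) ℝ) (Y : Matrix (Fin n) (Fin q) ℝ)
    (Bhat : Matrix (Fin p) (Fin q) ℝ)
    (hmin : ∀ B : Matrix (Fin p) (Fin q) ℝ,
      smoothedFrob σmin ((1 / Real.sqrt ((n : ℝ) * q)) • (Y - X * Bhat)) +
          lam * norm21 Bhat ≤
        smoothedFrob σmin ((1 / Real.sqrt ((n : ℝ) * q)) • (Y - X * B)) +
          lam * norm21 B) :
    (frob (Y - X * Bhat) / Real.sqrt ((n : ℝ) * q) ≥ σmin →
      (1 / ((n : ℝ) * q)) * norm2inf (Xᵀ * (Y - X * Bhat)) ≤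
        lam * (frob (Y - X * Bhat) / Real.sqrt ((n : ℝ) * q))) ∧
    (frob (Y - X * Bhat) / Real.sqrt ((n : ℝ) * q) < σmin →
      (1 / ((n : ℝ) * q)) * norm2inf (Xᵀ * (Y - X * Bhat)) ≤ lam * σmin) ∧
    (1 / ((n : ℝ) * q)) * norm2inf (Xᵀ * (Y - X * Bhat)) ≤
      lam * max (frob (Y - X * Bhat) / Real.sqrt ((n : ℝ) * q)) σmin := by
  classical
  have hnq : (0:ℝ) < (n : ℝ) * q := by
    have h1 : (0:ℝ) < (n:ℝ) := by exact_mod_cast hn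
    have h2 : (0:ℝ) < (q:ℝ) := by exact_mod_cast hq
    positivity
  set N := Real.sqrt ((n : ℝ) * q) with hNdef
  have hN : 0 < N := Real.sqrt_pos.mpr hnq
  have hNN : N * N = (n : ℝ) * q := Real.mul_self_sqrt hnq.le
  set c : ℝ := 1 / N with hcdef
  have hc : 0 < c := by positivity
  have hcc : c * c * ((n : ℝ) * q) = 1 := by
    rw [← hNN, hcdef]; field_simp
  set E := Y - X * Bhat with hEdef
  set r := frob E with hrdef
  have hr0 : 0 ≤ r := frob_nonneg E
  have hrN : r / N = c * r := by rw [hcdef]; ring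
  clear_value N c E r
  have hmaxpos : 0 < max (c * r) σmin := lt_max_of_lt_right hσ
  -- per-row bound
  have rowbound : ∀ j : Fin p,
      rowNorm ((Xᵀ * E) j) ≤ lam * (((n : ℝ) * q) * max (c * r) σmin) := by
    intro j
    set u : Fin q → ℝ := (Xᵀ * E) j with hudef
    set s := rowNorm u with hsdef
    have hs0 : 0 ≤ s := rowNorm_nonneg u
    have hs2 : s ^ 2 = ∑ k, u k ^ 2 := by
      rw [hsdef, rowNorm, Real.sq_sqrt (Finset.sum_nonneg fun k _ => sq_nonneg _)]
    clear_value u s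
    by_cases hrz : r = 0
    · -- residual is zero
      have hE0 : E = 0 := by
        have hsum : ∑ i, ∑ k, (E i k) ^ 2 = 0 := by
          have h1 : Real.sqrt (∑ i, ∑ k, (E i k) ^ 2) = 0 := by
            have h0 : frob E = 0 := by rw [← hrdef]; exact hrz
            rw [frob] at h0; exact h0
          have h2 : 0 ≤ ∑ i, ∑ k, (E i k) ^ 2 :=
            Finset.sum_nonneg fun i _ => Finset.sum_nonneg fun k _ => sq_nonneg _
          nlinarith [Real.sq_sqrt h2, h1]
        ext i k
        have h3 := (Finset.sum_eq_zero_iff_of_nonneg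
          (fun i _ => Finset.sum_nonneg fun k _ => sq_nonneg (E i k))).mp hsum i (Finset.mem_univ i)
        have h4 := (Finset.sum_eq_zero_iff_of_nonneg
          (fun k _ => sq_nonneg (E i k))).mp h3 k (Finset.mem_univ k)
        have := sq_eq_zero_iff.mp h4
        simpa using this
      have hu0 : u = 0 := by
        rw [hudef, hE0, Matrix.mul_zero]
        rfl
      have : s = 0 := by
        rw [hsdef, hu0, rowNorm]
        simp
      rw [this]
      exact le_of_lt (mul_pos hlam (mul_pos hnq hmaxpos))
    · have hrpos : 0 < r := lt_of_le_of_ne hr0 (Ne.symm hrz)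
      set Δ : Matrix (Fin p) (Fin q) ℝ := fun j' k => if j' = j then u k else 0 with hΔdef
      have hXΔ : ∀ i k, (X * Δ) i k = X i j * u k := by
        intro i k
        rw [Matrix.mul_apply]
        simp [hΔdef, mul_ite]
      have hu : ∀ k, u k = ∑ i, X i j * E i k := by
        intro k
        rw [hudef, Matrix.mul_apply]
        simp [Matrix.transpose_apply]
      have ip : (inner ℝ (mE E) (mE (X * Δ)) : ℝ) = s ^ 2 := by
        rw [hs2]
        simp only [PiLp.inner_apply, RCLike.inner_apply, conj_trivial]
        rw [Fintype.sum_prod_type, Finset.sum_comm]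
        refine Finset.sum_congr rfl fun k _ => ?_
        have h1 : ∀ i : Fin n, mE (X * Δ) (i, k) * mE E (i, k) = (X i j * E i k) * u k := by
          intro i
          rw [show mE E (i,k) = E i k from rfl, show mE (X * Δ) (i,k) = (X * Δ) i k from rfl,
            hXΔ i k]
          ring
        rw [Finset.sum_congr rfl fun i _ => h1 i, ← Finset.sum_mul, ← hu k]
        ring
      set M := ‖mE (X * Δ)‖ ^ 2 with hMdef
      have hM0 : 0 ≤ M := sq_nonneg _
      clear_value M
      have hFt : ∀ t : ℝ, (frob (E - t • (X * Δ))) ^ 2 = r ^ 2 - 2 * t * s ^ 2 + t ^ 2 * M := by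
        intro t
        rw [frob_eq, mE_sub]
        have h1 : mE (t • (X * Δ)) = t • mE (X * Δ) := by
          unfold mE; rw [← WithLp.toLp_smul]; rfl
        rw [h1, norm_sub_sq_real, real_inner_smul_right, ip, norm_smul, Real.norm_eq_abs,
          mul_pow, sq_abs, hrdef, frob_eq, ← hMdef]
        ring
      -- optimality step
      have hstep : ∀ t : ℝ, 0 ≤ t →
          huber σmin (c * r) ≤ huber σmin (c * frob (E - t • (X * Δ))) + lam * (t * s) := by
        intro t ht
        have hB := hmin (Bhat + t • Δ)
        have hres : Y - X * (Bhat + t • Δ) = E - t • (X * Δ) := by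
          rw [Matrix.mul_add, Matrix.mul_smul, hEdef]
          abel
        have hsf : ∀ Z : Matrix (Fin n) (Fin q) ℝ,
            smoothedFrob σmin (c • Z) = huber σmin (c * frob Z) := by
          intro Z
          rw [hcdef, smoothedFrob_eq hσ, frob_smul, abs_of_pos (one_div_pos.mpr hN)]
        rw [hres, hsf, hsf, ← hrdef] at hB
        have h21 : norm21 (Bhat + t • Δ) ≤ norm21 Bhat + t * s := by
          rw [norm21, norm21]
          have hrow : ∀ j' : Fin p, rowNorm ((Bhat + t • Δ) j') ≤
              rowNorm (Bhat j') + (if j' = j then t * s else 0) := by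
            intro j'
            by_cases hjj : j' = j
            · subst hjj
              have h2 : (Bhat + t • Δ) j' = fun k => Bhat j' k + t * u k := by
                funext k; show Bhat j' k + t * Δ j' k = Bhat j' k + t * u k; simp [hΔdef]
              rw [h2, if_pos rfl, hsdef]
              exact rowNorm_add_smul_le (Bhat j') u t ht
            · have h2 : (Bhat + t • Δ) j' = Bhat j' := by
                funext k; show Bhat j' k + t * Δ j' k = Bhat j' k; simp [hΔdef, hjj]
              rw [h2, if_neg hjj, add_zero]
            
          calc ∑ j', rowNorm ((Bhat + t • Δ) j')
              ≤ ∑ j', (rowNorm (Bhat j') + (if j' = j then t * s else 0)) :=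
                Finset.sum_le_sum fun j' _ => hrow j'
            _ = (∑ j', rowNorm (Bhat j')) + t * s := by
                rw [Finset.sum_add_distrib, Finset.sum_ite_eq' Finset.univ j fun _ => t * s]
                simp
        exact arith_step hlam hB h21
      -- combine with tangent line
      set k : ℝ := if σmin ≤ c * r then 1 else c * r / σmin with hkdef
      have hkpos : 0 < k := by
        rw [hkdef]; split_ifs
        · norm_num
        · positivity
      clear_value k
      have hmain2 : ∀ t : ℝ, 0 < t → t ≤ 1 → 2 * (k * c) * s ^ 2 ≤ 2 * lam * s * r +
          (k * c * M + c ^ 2 * (2 * s ^ 2 + M) ^ 2 / (σmin * r)) * t := by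
        intro t ht ht1
        set F := frob (E - t • (X * Δ)) with hFdef
        have hF0 : 0 ≤ F := frob_nonneg _
        have hF2 : F ^ 2 = r ^ 2 - 2 * t * s ^ 2 + t ^ 2 * M := hFt t
        clear_value F
        have h1 := hstep t ht.le
        have h2 := huber_smooth (σ := σmin) (a := c * r) (x := c * F) hσ
          (mul_pos hc hrpos).le (mul_nonneg hc.le hF0)
        rw [← hkdef] at h2
        rw [← hFdef] at h1
        have h3 : k * (c * r - c * F) ≤ c ^ 2 * (F - r) ^ 2 / (2 * σmin) + lam * (t * s) := by
          have hsq : (c * F - c * r) ^ 2 = c ^ 2 * (F - r) ^ 2 := by ring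
          rw [← hsq]
          linarith only [h1, h2]
        exact slope_bound hσ hc hrpos hkpos hF0 ht ht1 hM0 hF2 h3
      have hkc : 0 < k * c := mul_pos hkpos hc
      have hC0 : 0 ≤ k * c * M + c ^ 2 * (2 * s ^ 2 + M) ^ 2 / (σmin * r) :=
        add_nonneg (mul_nonneg hkc.le hM0)
          (div_nonneg (mul_nonneg (sq_nonneg c) (sq_nonneg _)) (mul_pos hσ hrpos).le)
      set C := k * c * M + c ^ 2 * (2 * s ^ 2 + M) ^ 2 / (σmin * r) with hCdef
      clear_value C
      have hA : 2 * (k * c) * s ^ 2 ≤ 2 * lam * s * r := by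
        apply le_of_forall_pos_le_add
        intro ε hε
        have hden : 0 < C + 1 := by linarith
        have ht : 0 < min 1 (ε / (C + 1)) := lt_min one_pos (div_pos hε hden)
        have ht1 : min 1 (ε / (C + 1)) ≤ 1 := min_le_left _ _
        have h8 := hmain2 _ ht ht1
        have h9 : C * min 1 (ε / (C + 1)) ≤ ε := by
          have h9a : C * min 1 (ε / (C + 1)) ≤ C * (ε / (C + 1)) :=
            mul_le_mul_of_nonneg_left (min_le_right _ _) hC0
          have h9b : C * (ε / (C + 1)) ≤ ε := eps_helper hC0 hε
          linarith only [h9a, h9b]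
        linarith only [h8, h9]
      -- conclude
      rcases eq_or_lt_of_le hs0 with hsz | hspos
      · rw [← hsz]; positivity
      · have hkcs : k * c * s ≤ lam * r := by
          have h14 : (k * c * s) * s ≤ (lam * r) * s := by linarith only [hA]
          exact le_of_mul_le_mul_right h14 hspos
        rw [hkdef] at hkcs
        rcases le_or_gt σmin (c * r) with hcase | hcase
        · rw [if_pos hcase, one_mul] at hkcs
          rw [max_eq_left hcase]
          -- goal : s ≤ lam * ((n*q) * (c * r)); note (n*q) * c = N
          have hNc : N * c = 1 := by rw [hcdef]; field_simp
          have h10 : ((n : ℝ) * q) * (c * r) = N * r := by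
            rw [← hNN, hcdef]; field_simp
          rw [h10]
          have h15 := mul_le_mul_of_nonneg_left hkcs hN.le
          have h16 : N * (c * s) = s := by rw [← mul_assoc, hNc, one_mul]
          rw [h16] at h15
          ring_nf at h15 ⊢
          linarith only [h15]
        · rw [if_neg (not_le.mpr hcase)] at hkcs
          rw [max_eq_right hcase.le]
          -- hkcs : (c*r/σ) * c * s ≤ lam * r
          have hkσ : (c * r / σmin) * σmin = c * r := by field_simp
          have h11 : c * c * s ≤ lam * σmin := by
            have h12 : ((c * r / σmin) * c * s) * σmin ≤ (lam * r) * σmin :=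
              mul_le_mul_of_nonneg_right hkcs hσ.le
            have h13 : ((c * r / σmin) * c * s) * σmin = (c * c * s) * r := by
              field_simp
            rw [h13] at h12
            have h14 : (c * c * s) * r ≤ (lam * σmin) * r := by linarith only [h12]
            exact le_of_mul_le_mul_right h14 hrpos
          have h17 := mul_le_mul_of_nonneg_left h11 hnq.le
          have h18 : ((n : ℝ) * q) * (c * c * s) = s := by
            rw [show ((n : ℝ) * q) * (c * c * s) = (c * c * ((n : ℝ) * q)) * s by ring, hcc,
              one_mul]
          rw [h18] at h17
          ring_nf at h17 ⊢
          linarith only [h17]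
  -- assemble
  have hsup : norm2inf (Xᵀ * E) ≤ lam * (((n : ℝ) * q) * max (c * r) σmin) :=
    Real.iSup_le rowbound (le_of_lt (mul_pos hlam (mul_pos hnq hmaxpos)))
  have main : (1 / ((n : ℝ) * q)) * norm2inf (Xᵀ * E) ≤ lam * max (c * r) σmin := by
    have h1 := mul_le_mul_of_nonneg_left hsup (by positivity : (0:ℝ) ≤ 1 / ((n : ℝ) * q))
    have h2 : (1 / ((n : ℝ) * q)) * (lam * (((n : ℝ) * q) * max (c * r) σmin)) =
        lam * max (c * r) σmin := by
      field_simp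
    linarith [h1, h2.le, h2.ge]
  rw [hrN]
  refine ⟨fun h => ?_, fun h => ?_, main⟩
  · rw [max_eq_left h] at main
    exact main
  · rw [max_eq_right h.le] at main
    exact main
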